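/- For all integers n, k with k ≥ 0 and n ≥ 2k+1, the identity ∑_{i=0}^{k+1} (-1)^i · C(k+1, i) · ∏_{j=i}^{k} ((2n-2j-1)/(2n-2k-2j-1)) = 0 holds in ℚ, where the product is empty (equal to 1) when i = k+1, so that the last term is (-1)^{k+1}. (All denominators 2n-2k-2j-1 are positive odd integers since n ≥ 2k+1.) -/
import Mathlib


open Finset Polynomial fwdDiff

private lemma fwdDiff_iter_zero_fun (N : ℕ) :
    (fwdDiff (1:ℕ))^[N] (fun _ : ℕ => (0:ℚ)) = fun _ => 0 := by
  induction N with
  | zero => rfl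
  | succ N ih =>
    rw [Function.iterate_succ_apply,
      show (fwdDiff (1:ℕ)) (fun _ : ℕ => (0:ℚ)) = fun _ => 0 from funext fun _ => sub_self 0, ih]

private lemma lemA (N : ℕ) (p : ℚ[X]) (hp : p.degree < N) :
    (fwdDiff (1:ℕ))^[N] (fun i : ℕ => p.eval (i:ℚ)) = fun _ => 0 := by
  induction N generalizing p with
  | zero =>
    have : p = 0 := by
      rw [← Polynomial.degree_eq_bot]
      simpa using hp
    subst this
    simpa using fwdDiff_iter_zero_fun 0
  | succ N ih =>
    have hstep : fwdDiff (1:ℕ) (fun i : ℕ => p.eval (i:ℚ))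
        = fun i : ℕ => (p.comp (X + C 1) - p).eval (i:ℚ) := by
      funext i
      simp [fwdDiff, eval_comp]
    rw [Function.iterate_succ_apply, hstep]
    apply ih
    rcases eq_or_ne p 0 with rfl | hp0
    · simp only [zero_comp, sub_zero, degree_zero]
      exact bot_lt_iff_ne_bot.mpr (by simp)
    · have hc0 : p.comp (X + C (1:ℚ)) ≠ 0 := comp_X_add_C_ne_zero_iff.mpr hp0
      have h1 : (p.comp (X + C 1)).degree = p.degree := by
        rw [degree_eq_natDegree hc0, degree_eq_natDegree hp0, ← taylor_apply, natDegree_taylor]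
      have h2 : (p.comp (X + C 1)).leadingCoeff = p.leadingCoeff := by
        rw [leadingCoeff_comp (by rw [natDegree_X_add_C]; exact one_ne_zero),
          (monic_X_add_C (1:ℚ)).leadingCoeff, one_pow, mul_one]
      have h3 := degree_sub_lt h1 hc0 h2
      rw [h1] at h3
      refine lt_of_lt_of_le h3 ?_
      rw [degree_eq_natDegree hp0] at hp ⊢
      exact_mod_cast Nat.lt_succ_iff.mp (by exact_mod_cast hp)

private lemma lemB (N : ℕ) (p : ℚ[X]) (hp : p.degree < N) :
    ∑ i ∈ range (N+1), (-1:ℚ)^i * (N.choose i : ℚ) * p.eval (i:ℚ) = 0 := by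
  have h0 := fwdDiff_iter_eq_sum_shift (1:ℕ) (fun i : ℕ => p.eval (i:ℚ)) N 0
  rw [lemA N p hp] at h0
  simp only [zsmul_eq_mul] at h0
  have key : ∑ i ∈ range (N+1), (-1:ℚ)^i * (N.choose i : ℚ) * p.eval (i:ℚ)
      = (-1:ℚ)^N * ∑ i ∈ range (N + 1),
          (((-1:ℤ) ^ (N - i) * (N.choose i) : ℤ) : ℚ) * p.eval (((0 + i • 1 : ℕ) : ℚ)) := by
    rw [mul_sum]
    refine sum_congr rfl fun i hi => ?_
    have hiN : i ≤ N := Nat.lt_succ_iff.mp (mem_range.mp hi)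
    have hcast : ((0 + i • 1 : ℕ) : ℚ) = (i : ℚ) := by simp
    rw [hcast]
    push_cast
    have hone : (-1:ℚ)^(N-i) * (-1:ℚ)^i = (-1:ℚ)^N := by
      rw [← pow_add, Nat.sub_add_cancel hiN]
    have hsq : (-1:ℚ)^(N-i) * (-1:ℚ)^(N-i) = 1 := by
      rw [← pow_add]
      exact Even.neg_one_pow ⟨N - i, rfl⟩
    have h2 : (-1:ℚ)^N * (-1:ℚ)^(N-i) = (-1:ℚ)^i := by
      rw [← hone]; linear_combination (-1:ℚ)^i * hsq
    linear_combination (-((N.choose i : ℚ) * p.eval (i:ℚ))) * h2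
  rw [key, ← h0]
  simp

private lemma aux_prod (a : ℕ → ℚ) (ha : ∀ j, a j ≠ 0) (k : ℕ) :
    ∀ i, i ≤ k + 1 → (∏ j ∈ Icc i k, a j) * (∏ j ∈ range i, a (k + j))
      = a k * ∏ t ∈ range k, a (i + t) := by
  have hg : ∀ i', ∏ t ∈ range k, a (i' + t) = ∏ j ∈ Ico i' (i' + k), a j := by
    intro i'
    rw [Finset.prod_Ico_eq_prod_range]
    simp
  intro i
  induction i with
  | zero =>
    intro _
    rw [show Icc 0 k = range (k+1) from by rw [range_eq_Ico, Finset.Ico_add_one_right_eq_Icc],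
      prod_range_succ]
    simp [mul_comm]
  | succ i ih =>
    intro hi
    have hik : i ≤ k := by omega
    have h1 : ∏ j ∈ Icc i k, a j = a i * ∏ j ∈ Icc (i+1) k, a j := by
      rw [← Finset.Ico_add_one_right_eq_Icc, ← Finset.Ico_add_one_right_eq_Icc]
      exact Finset.prod_eq_prod_Ico_succ_bot (by omega) a
    have h3 : a i * ∏ t ∈ range k, a (i + 1 + t) = a (i + k) * ∏ t ∈ range k, a (i + t) := by
      rw [hg, hg, show i + 1 + k = i + k + 1 from by omega,
        ← Finset.prod_eq_prod_Ico_succ_bot (by omega : i < i + k + 1) a,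
        Finset.prod_Ico_succ_top (by omega : i ≤ i + k) a]
      ring
    apply mul_left_cancel₀ (ha i)
    rw [show a i * ((∏ j ∈ Icc (i+1) k, a j) * ∏ j ∈ range (i+1), a (k + j))
        = ((a i * ∏ j ∈ Icc (i+1) k, a j) * ∏ j ∈ range i, a (k + j)) * a (k + i) from by
      rw [prod_range_succ]; ring]
    rw [← h1, ih (by omega), show k + i = i + k from by omega]
    linear_combination (-(a k)) * h3

private lemma main_general (a : ℕ → ℚ) (ha : ∀ j, a j ≠ 0) (k : ℕ)
    (p : ℚ[X]) (hp : p.degree < ((k + 1 : ℕ) : WithBot ℕ))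
    (hpe : ∀ i : ℕ, p.eval (i:ℚ) = ∏ t ∈ range k, a (i + t)) :
    ∑ i ∈ range (k + 2), (-1:ℚ)^i * ((k+1).choose i : ℚ) *
      ∏ j ∈ Icc i k, (a j / a (k + j)) = 0 := by
  set D := ∏ j ∈ range (k+1), a (k+j) with hDdef
  have hD : D ≠ 0 := prod_ne_zero_iff.mpr fun j _ => ha _
  have hterm : ∀ i ∈ range (k+2),
      ∏ j ∈ Icc i k, (a j / a (k + j)) = (a k * ∏ t ∈ range k, a (i + t)) / D := by
    intro i hi
    have hik : i ≤ k + 1 := by have := mem_range.mp hi; omega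
    have hP : (∏ j ∈ range i, a (k + j)) ≠ 0 := prod_ne_zero_iff.mpr fun j _ => ha _
    have hsplit : (∏ j ∈ range i, a (k+j)) * (∏ j ∈ Icc i k, a (k+j)) = D := by
      rw [hDdef]
      simp only [range_eq_Ico, ← Finset.Ico_add_one_right_eq_Icc]
      exact Finset.prod_Ico_consecutive (fun j => a (k+j)) (Nat.zero_le i) hik
    rw [prod_div_distrib, ← aux_prod a ha k i hik, ← hsplit,
      mul_comm (∏ j ∈ range i, a (k + j)) (∏ j ∈ Icc i k, a (k + j))]
    exact (mul_div_mul_right _ _ hP).symm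
  calc ∑ i ∈ range (k + 2), (-1:ℚ)^i * ((k+1).choose i : ℚ) *
        ∏ j ∈ Icc i k, (a j / a (k + j))
      = ∑ i ∈ range (k + 2), (a k / D) * ((-1:ℚ)^i * ((k+1).choose i : ℚ) * p.eval (i:ℚ)) := by
        refine sum_congr rfl fun i hi => ?_
        rw [hterm i hi, hpe]
        ring
    _ = (a k / D) * ∑ i ∈ range (k + 2), (-1:ℚ)^i * ((k+1).choose i : ℚ) * p.eval (i:ℚ) :=
        (mul_sum _ _ _).symm
    _ = 0 := by
        have hz : ∑ i ∈ range (k + 2), (-1:ℚ)^i * ((k+1).choose i : ℚ) * p.eval (i:ℚ) = 0 :=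
          lemB (k+1) p hp
        rw [hz, mul_zero]

theorem stmt5 (n k : ℕ) (h : 2 * k + 1 ≤ n) :
    ∑ i ∈ Finset.range (k + 2),
      (-1 : ℚ) ^ i * (Nat.choose (k + 1) i : ℚ) *
        ∏ j ∈ Finset.Icc i k,
          ((2 * (n : ℚ) - 2 * j - 1) / (2 * (n : ℚ) - 2 * k - 2 * j - 1)) = 0 := by
  have ha : ∀ j : ℕ, (2 * (n : ℚ) - 2 * (j:ℚ) - 1) ≠ 0 := by
    intro j hj
    have h1 : ((2 * (n:ℤ) - 2 * (j:ℤ) - 1 : ℤ) : ℚ) = 0 := by push_cast; linarith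
    have h2 : (2 * (n:ℤ) - 2 * (j:ℤ) - 1) = 0 := by exact_mod_cast h1
    omega
  set p : ℚ[X] := ∏ t ∈ range k, (C (2 * (n:ℚ) - 2 * (t:ℚ) - 1) - C 2 * X) with hpdef
  have hdeg : p.natDegree ≤ k := by
    refine le_trans (natDegree_prod_le _ _) ?_
    calc ∑ t ∈ range k, (C (2 * (n:ℚ) - 2 * (t:ℚ) - 1) - C 2 * X).natDegree
        ≤ ∑ _t ∈ range k, 1 := by
          refine sum_le_sum fun t _ => ?_
          refine le_trans (natDegree_sub_le _ _) ?_
          simp only [natDegree_C, max_le_iff]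
          exact ⟨Nat.zero_le _, le_trans (natDegree_mul_le) (by simp)⟩
      _ = k := by simp
  have hp : p.degree < ((k + 1 : ℕ) : WithBot ℕ) := by
    have h1 : p.degree ≤ ((k : ℕ) : WithBot ℕ) :=
      degree_le_natDegree.trans (by exact_mod_cast hdeg)
    exact lt_of_le_of_lt h1 (by exact_mod_cast Nat.lt_succ_self k)
  have hpe : ∀ i : ℕ, p.eval (i:ℚ) = ∏ t ∈ range k, (2 * (n:ℚ) - 2 * ((i + t : ℕ):ℚ) - 1) := by
    intro i
    rw [hpdef, eval_prod]
    refine prod_congr rfl fun t _ => ?_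
    simp only [eval_sub, eval_C, eval_mul, eval_X]
    push_cast
    ring
  have key := main_general (fun j : ℕ => 2 * (n:ℚ) - 2 * (j:ℚ) - 1) ha k p hp hpe
  refine Eq.trans ?_ key
  refine sum_congr rfl fun i _ => ?_
  congr 1
  refine prod_congr rfl fun j _ => ?_
  show _ = (2 * (n:ℚ) - 2 * (j:ℚ) - 1) / (2 * (n:ℚ) - 2 * ((k + j : ℕ):ℚ) - 1)
  congr 1
  push_cast
  ring
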